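/- Let A, B, E ≥ 0, α ∈ [0,1], C > 0, and ε ∈ (0,1) with 1/ε ∈ ℕ, and define g(t) = (e^{−t} − e^{−2t})·A + (t²·e^{−2t}/2)·B for t ∈ [0,1]. There exists a constant C' > 0 depending only on C such that: if nonnegative real numbers v₀, v₁, …, v_{1/ε} satisfy, for every integer 1 ≤ i ≤ 1/ε, v_i − v_{i−1} ≥ εα·[(1−ε)^i·A + ε(1−ε)^{2i−2}(i−1)·B] − 2ε·v_{i−1} − 3ε²·v_{i−1} − Cε²·E, then for every integer 0 ≤ i ≤ 1/ε: v_i ≥ α·g(εi) − 3ε²·Σ_{i'=1}^{i} v_{i'−1} − i·C'ε²·(αA + αB + E). -/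

import Mathlib

noncomputable section

private lemma powLower (ε : ℝ) (n : ℕ) (h0 : 0 < ε) (h1 : ε < 1) :
    Real.exp (-(ε*n)) - n*ε^2 ≤ (1-ε)^n := by
  have hkey : Real.exp (-ε) * (1 - ε^2) ≤ 1 - ε := by
    have h := Real.add_one_le_exp ε
    have h2 : Real.exp ε * Real.exp (-ε) = 1 := by rw [← Real.exp_add]; simp
    nlinarith [Real.exp_pos ε, Real.exp_pos (-ε)]
  have hnn : 0 ≤ Real.exp (-ε) * (1 - ε^2) :=
    mul_nonneg (Real.exp_pos _).le (by nlinarith)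
  have hp : (Real.exp (-ε) * (1 - ε^2))^n ≤ (1-ε)^n := pow_le_pow_left₀ hnn hkey n
  have he : (Real.exp (-ε))^n = Real.exp (-(ε*n)) := by
    rw [← Real.exp_nat_mul]; ring_nf
  have hb : 1 - (n:ℝ)*ε^2 ≤ (1 - ε^2)^n := by
    have := one_add_mul_le_pow (a := -ε^2) (by nlinarith) n
    rw [← sub_eq_add_neg] at this; linarith
  have hn2 : (0:ℝ) ≤ (n:ℝ)*ε^2 := by positivity
  have hexp1 : Real.exp (-(ε*n)) ≤ 1 :=
    Real.exp_le_one_iff.mpr (neg_nonpos.mpr (by positivity))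
  have hfin : Real.exp (-(ε*n)) - n*ε^2 ≤ Real.exp (-(ε*n)) * (1 - n*ε^2) := by
    nlinarith [mul_le_mul_of_nonneg_right hexp1 hn2]
  calc Real.exp (-(ε*n)) - n*ε^2 ≤ Real.exp (-(ε*n)) * (1 - n*ε^2) := hfin
    _ ≤ Real.exp (-(ε*n)) * (1 - ε^2)^n :=
        mul_le_mul_of_nonneg_left hb (Real.exp_pos _).le
    _ = (Real.exp (-ε) * (1 - ε^2))^n := by rw [mul_pow, he]
    _ ≤ (1-ε)^n := hp

private lemma lemA (ε x u : ℝ) (hε0 : 0 < ε) (hε : ε ≤ 1/2) (hx0 : 0 < x) (hx1 : x ≤ 1)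
    (hu1 : 1 + ε ≤ u) (hu2 : u*(1-ε) ≤ 1) :
    (x - x^2) - (1-2*ε)*(x*u - (x*u)^2) - ε*x ≤ 2*ε^2 := by
  have h2ε : 0 ≤ 1 - 2*ε := by linarith
  have hc1 : 1 - (1-2*ε)*u - ε ≤ 2*ε^2 := by nlinarith
  have hc2 : 0 ≤ 1 - (1-2*ε)*u^2 := by
    nlinarith [sq_nonneg u, sq_nonneg (u*(1-ε)), mul_pos hε0 hε0]
  have hx2 : 0 ≤ x^2 := sq_nonneg x
  nlinarith [mul_le_mul_of_nonneg_left hc1 hx0.le, mul_nonneg hx2 hc2]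

private lemma lemB (ε x u t : ℝ) (hε0 : 0 < ε) (hε : ε ≤ 1/2) (hx0 : 0 < x) (hx1 : x ≤ 1)
    (hu1 : 1 + ε ≤ u) (ht1 : t ≤ 1) (hts : ε ≤ t) :
    t^2*x^2/2 - (1-2*ε)*((t-ε)^2*(x*u)^2/2) - ε*(t-ε)*x^2 ≤ 3*ε^2 := by
  have h2ε : 0 ≤ 1 - 2*ε := by linarith
  have hu0 : 0 ≤ u - (1+ε) := by linarith
  have hul : 1 - 4*ε^2 ≤ (1-2*ε)*u^2 := by
    nlinarith [mul_nonneg h2ε (mul_nonneg hu0 (by linarith : (0:ℝ) ≤ u + (1+ε))),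
      mul_nonneg (sq_nonneg ε) h2ε]
  have hs0 : 0 ≤ t - ε := by linarith
  have hs1 : t - ε ≤ 1 := by linarith
  have hbr : t^2/2 - (1-2*ε)*u^2*(t-ε)^2/2 - ε*(t-ε) ≤ 5/2*ε^2 := by
    nlinarith [mul_le_mul_of_nonneg_right hul (sq_nonneg (t-ε)),
      mul_le_mul_of_nonneg_left (show (t-ε)^2 ≤ 1 by nlinarith) (sq_nonneg ε),
      mul_nonneg (sq_nonneg ε) (mul_nonneg hs0 hs0)]
  have hx2 : 0 ≤ x^2 := sq_nonneg x
  have hx21 : x^2 ≤ 1 := by nlinarith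
  nlinarith [mul_le_mul_of_nonneg_left hbr hx2, mul_nonneg hx2 (sq_nonneg ε)]

set_option maxHeartbeats 2000000 in
theorem stmt_9 (C : ℝ) (hC : 0 < C) :
    ∃ C' : ℝ, 0 < C' ∧
      ∀ (A B E α ε : ℝ) (N : ℕ) (v : ℕ → ℝ),
        0 ≤ A → 0 ≤ B → 0 ≤ E → 0 ≤ α → α ≤ 1 → 0 < ε → ε < 1 → (N : ℝ) * ε = 1 →
        (∀ i ≤ N, 0 ≤ v i) →
        (∀ i, 1 ≤ i → i ≤ N →
          ε * α * ((1 - ε)^i * A + ε * (1 - ε)^(2*i-2) * ((i : ℝ) - 1) * B)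
            - 2*ε * v (i-1) - 3*ε^2 * v (i-1) - C*ε^2*E ≤ v i - v (i-1)) →
        ∀ i ≤ N,
          α * ((Real.exp (-(ε*i)) - Real.exp (-(2*(ε*i)))) * A
              + (ε*i)^2 * Real.exp (-(2*(ε*i))) / 2 * B)
            - 3*ε^2 * ∑ i' ∈ Finset.Icc 1 i, v (i' - 1)
            - i * C' * ε^2 * (α*A + α*B + E) ≤ v i := by
  refine ⟨C + 7, by linarith, ?_⟩
  intro A B E α ε N v hA hB hE hα0 hα1 hε0 hε1 hNε hv hrec
  have hN2 : (2:ℝ) ≤ (N:ℝ) := by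
    have h2 : 2 ≤ N := by
      by_contra h
      interval_cases N
      · simp at hNε
      · simp at hNε; linarith
    exact_mod_cast h2
  have hεhalf : ε ≤ 1/2 := by nlinarith
  have hu1 : 1 + ε ≤ Real.exp ε := by have := Real.add_one_le_exp ε; linarith
  have hu2 : Real.exp ε * (1 - ε) ≤ 1 := by
    have h := Real.add_one_le_exp (-ε)
    have h2 : Real.exp ε * Real.exp (-ε) = 1 := by rw [← Real.exp_add]; simp
    nlinarith [Real.exp_pos ε]
  have hK : 0 ≤ α*A + α*B + E :=
    add_nonneg (add_nonneg (mul_nonneg hα0 hA) (mul_nonneg hα0 hB)) hE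
  intro i
  induction i with
  | zero =>
    intro _
    have h0 := hv 0 (Nat.zero_le N)
    simp only [Nat.cast_zero, mul_zero, neg_zero, Real.exp_zero, Finset.Icc_self]
    norm_num
    linarith
  | succ i IH =>
    intro hiN
    have hiN' : i ≤ N := Nat.le_of_succ_le hiN
    have IH' := IH hiN'
    -- basic bounds
    have hiR : ((i:ℝ)+1) ≤ (N:ℝ) := by exact_mod_cast hiN
    have htle : ε * ((i:ℝ)+1) ≤ 1 := by nlinarith
    have hsle : ε * (i:ℝ) ≤ 1 := by
      have : (0:ℝ) ≤ (i:ℝ) := Nat.cast_nonneg i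
      nlinarith
    have hS : 0 ≤ ∑ i' ∈ Finset.Icc 1 i, v (i' - 1) := by
      apply Finset.sum_nonneg
      intro j hj
      rw [Finset.mem_Icc] at hj
      exact hv (j-1) (by omega)
    have hvi : 0 ≤ v i := hv i hiN'
    -- recursion step
    have hvstep := hrec (i+1) (by omega) hiN
    rw [show 2*(i+1)-2 = 2*i from by omega] at hvstep
    simp only [Nat.add_sub_cancel] at hvstep
    push_cast at hvstep
    simp only [add_sub_cancel_right] at hvstep
    -- goal simplification
    rw [Finset.sum_Icc_succ_top (Nat.le_add_left 1 i)]
    simp only [Nat.add_sub_cancel]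
    push_cast
    -- abbreviations
    obtain ⟨x, hxdef⟩ : ∃ x', Real.exp (-(ε*((i:ℝ)+1))) = x' := ⟨_, rfl⟩
    obtain ⟨u, hudef⟩ : ∃ u', Real.exp ε = u' := ⟨_, rfl⟩
    rw [hudef] at hu1 hu2
    have hx0 : 0 < x := hxdef ▸ Real.exp_pos _
    have hx1 : x ≤ 1 := hxdef ▸ Real.exp_le_one_iff.mpr (neg_nonpos.mpr (by positivity))
    have hxs : Real.exp (-(ε*(i:ℝ))) = x * u := by
      rw [← hxdef, ← hudef, ← Real.exp_add]; ring_nf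
    have hx2t : Real.exp (-(2*(ε*((i:ℝ)+1)))) = x^2 := by
      rw [show -(2*(ε*((i:ℝ)+1))) = -(ε*((i:ℝ)+1)) + -(ε*((i:ℝ)+1)) by ring,
        Real.exp_add, hxdef]; ring
    have hx2s : Real.exp (-(2*(ε*(i:ℝ)))) = (x*u)^2 := by
      rw [show -(2*(ε*(i:ℝ))) = -(ε*(i:ℝ)) + -(ε*(i:ℝ)) by ring, Real.exp_add, hxs]; ring
    rw [hxs, hx2s] at IH'
    rw [hx2t, hxdef]
    -- pow lower bounds
    have hp1 : x - ((i:ℝ)+1)*ε^2 ≤ (1-ε)^(i+1) := by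
      have h := powLower ε (i+1) hε0 hε1
      push_cast at h
      rw [hxdef] at h
      exact h
    have hp2 : x^2 - (2*(i:ℝ))*ε^2 ≤ (1-ε)^(2*i) := by
      have h := powLower ε (2*i) hε0 hε1
      push_cast at h
      have hmono : x^2 ≤ Real.exp (-(ε*(2*(i:ℝ)))) := by
        rw [← hx2t]
        apply Real.exp_le_exp.mpr
        have : (0:ℝ) ≤ ε := hε0.le
        nlinarith [Nat.cast_nonneg (α := ℝ) i]
      linarith
    -- Term A bound
    have hTA : (x - x^2) - (1-2*ε)*(x*u - (x*u)^2) - ε*(1-ε)^(i+1) ≤ 7*ε^2 := by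
      have h1 := lemA ε x u hε0 hεhalf hx0 hx1 hu1 hu2
      have h2 : ε*(x - (1-ε)^(i+1)) ≤ ε*(((i:ℝ)+1)*ε^2) :=
        mul_le_mul_of_nonneg_left (by linarith) hε0.le
      have h3 : ε*(((i:ℝ)+1)*ε^2) ≤ ε^2 := by nlinarith [sq_nonneg ε]
      nlinarith
    -- Term B bound
    have hTB : (ε*((i:ℝ)+1))^2*x^2/2 - (1-2*ε)*((ε*(i:ℝ))^2*(x*u)^2/2)
        - ε^2*(i:ℝ)*(1-ε)^(2*i) ≤ 7*ε^2 := by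
      have h1 := lemB ε x u (ε*((i:ℝ)+1)) hε0 hεhalf hx0 hx1 hu1 htle (by nlinarith [Nat.cast_nonneg (α := ℝ) i])
      have hts : ε*((i:ℝ)+1) - ε = ε*(i:ℝ) := by ring
      rw [hts] at h1
      have hi0 : (0:ℝ) ≤ (i:ℝ) := Nat.cast_nonneg i
      have h2 : ε^2*(i:ℝ)*(x^2 - (1-ε)^(2*i)) ≤ ε^2*(i:ℝ)*(2*(i:ℝ)*ε^2) :=
        mul_le_mul_of_nonneg_left (by linarith) (by positivity)
      have hq : (ε*(i:ℝ))^2 ≤ 1 := by nlinarith [mul_nonneg hε0.le hi0]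
      have h3 : ε^2*(i:ℝ)*(2*(i:ℝ)*ε^2) ≤ 2*ε^2 := by
        nlinarith [mul_le_mul_of_nonneg_right hq (sq_nonneg ε)]
      nlinarith
    -- key inequality
    have hkey : α*((x - x^2)*A + (ε*((i:ℝ)+1))^2*x^2/2*B)
        - (1-2*ε)*(α*((x*u - (x*u)^2)*A + (ε*(i:ℝ))^2*(x*u)^2/2*B))
        - ε*α*((1-ε)^(i+1)*A + ε*(1-ε)^(2*i)*(i:ℝ)*B)
        + C*ε^2*E ≤ (C+7)*ε^2*(α*A+α*B+E) := by
      have hm1 : α*A*((x - x^2) - (1-2*ε)*(x*u - (x*u)^2) - ε*(1-ε)^(i+1))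
          ≤ α*A*(7*ε^2) := mul_le_mul_of_nonneg_left hTA (mul_nonneg hα0 hA)
      have hm2 : α*B*((ε*((i:ℝ)+1))^2*x^2/2 - (1-2*ε)*((ε*(i:ℝ))^2*(x*u)^2/2)
          - ε^2*(i:ℝ)*(1-ε)^(2*i)) ≤ α*B*(7*ε^2) :=
        mul_le_mul_of_nonneg_left hTB (mul_nonneg hα0 hB)
      have hm3 : 0 ≤ C*ε^2*(α*A) := by
        apply mul_nonneg (by positivity) (mul_nonneg hα0 hA)
      have hm4 : 0 ≤ C*ε^2*(α*B) := by
        apply mul_nonneg (by positivity) (mul_nonneg hα0 hB)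
      have hm5 : 0 ≤ 7*ε^2*E := by positivity
      nlinarith
    -- assembly
    have h2ε : 0 ≤ 1 - 2*ε := by linarith
    have h1 : (1-2*ε)*(α*((x*u - (x*u)^2)*A + (ε*(i:ℝ))^2*(x*u)^2/2*B)
          - 3*ε^2*(∑ i' ∈ Finset.Icc 1 i, v (i' - 1)) - (i:ℝ)*(C+7)*ε^2*(α*A+α*B+E))
        ≤ (1-2*ε)*(v i) := mul_le_mul_of_nonneg_left IH' h2ε
    have h3 : 0 ≤ 2*ε*(3*ε^2*(∑ i' ∈ Finset.Icc 1 i, v (i' - 1))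
        + (i:ℝ)*(C+7)*ε^2*(α*A+α*B+E)) := by
      apply mul_nonneg (by positivity)
      apply add_nonneg (mul_nonneg (by positivity) hS)
      exact mul_nonneg (mul_nonneg (mul_nonneg (Nat.cast_nonneg i) (by linarith)) (sq_nonneg ε)) hK
    nlinarith [h1, h3, hkey, hvstep]
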